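/- Let n ≥ 2 and let p(S) be defined for nonempty subsets S of {1, …, n−1} by p(S) = n if |S| = 1 and p(S) = the second-smallest element of S if |S| ≥ 2. Then for m = n−1, the number of nonempty subsets S of {1, …, n−1} with p(S) ≥ m+1 equals n−1; and for each m with 1 ≤ m ≤ n−2, the number of nonempty subsets S of {1, …, n−1} with p(S) ≥ m+1 equals (n−1) + ∑_{k=m+1}^{n−1} 2^{n−k−1}(k−1). -/

import Mathlib

/-- The second-smallest element of a finite set of naturals (meaningful when
the set has at least two elements). -/
noncomputable def secondMin (S : Finset ℕ) : ℕ :=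
  sInf ((S : Set ℕ) \ {sInf (S : Set ℕ)})

/-- The position `p(S)` of the `1`-control of the gate corresponding to a
nonempty subset `S` of `{1, …, n-1}`: equal to `n` if `S` is a singleton,
and to the second-smallest element of `S` otherwise. -/
noncomputable def controlPos (n : ℕ) (S : Finset ℕ) : ℕ :=
  if S.card = 1 then n else secondMin S

open Finset

private lemma key_iff (n m : ℕ) (hm : 1 ≤ m) (hmn : m ≤ n - 1) (hn : 2 ≤ n)
    (S : Finset ℕ) (hS : S.Nonempty) :
    m + 1 ≤ controlPos n S ↔ (S.filter (· ≤ m)).card ≤ 1 := by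
  by_cases h1 : S.card = 1
  · unfold controlPos
    rw [if_pos h1]
    constructor
    · intro _
      calc (S.filter (· ≤ m)).card ≤ S.card := card_filter_le _ _
        _ ≤ 1 := by omega
    · intro _; omega
  · have h2 : 2 ≤ S.card := by
      have := hS.card_pos; omega
    unfold controlPos
    rw [if_neg h1]
    have hmin := S.min'_mem hS
    have hErase : (S.erase (S.min' hS)).Nonempty := by
      rw [← card_pos, card_erase_of_mem hmin]; omega
    have hsm : secondMin S = (S.erase (S.min' hS)).min' hErase := by
      unfold secondMin
      rw [hS.csInf_eq_min', ← coe_erase, hErase.csInf_eq_min']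
    rw [hsm, le_min'_iff]
    constructor
    · intro h
      rw [card_le_one]
      intro a ha b hb
      simp only [mem_filter] at ha hb
      by_contra hne
      -- one of a, b is not the min, so ≥ m+1, contradiction
      rcases eq_or_ne a (S.min' hS) with h' | h'
      · have : m + 1 ≤ b := h b (mem_erase.mpr ⟨by omega, hb.1⟩)
        omega
      · have : m + 1 ≤ a := h a (mem_erase.mpr ⟨h', ha.1⟩)
        omega
    · intro h y hy
      rw [mem_erase] at hy
      by_contra hle
      have hyS : y ∈ S.filter (· ≤ m) := mem_filter.mpr ⟨hy.2, by omega⟩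
      have hminm : S.min' hS ≤ m := le_trans (S.min'_le y hy.2) (by omega)
      have hmS : S.min' hS ∈ S.filter (· ≤ m) := mem_filter.mpr ⟨hmin, hminm⟩
      have : 1 < (S.filter (· ≤ m)).card := one_lt_card.mpr ⟨_, hmS, _, hyS, fun h' => hy.1 h'.symm⟩
      omega

private lemma card_le_one_powerset (m : ℕ) :
    ((Finset.Icc 1 m).powerset.filter fun B => B.card ≤ 1).card = m + 1 := by
  have heq : ((Finset.Icc 1 m).powerset.filter fun B => B.card ≤ 1)
      = insert ∅ ((Finset.Icc 1 m).image fun x => ({x} : Finset ℕ)) := by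
    ext B
    simp only [mem_filter, mem_powerset, mem_insert, mem_image]
    constructor
    · rintro ⟨hsub, hcard⟩
      rcases Nat.le_one_iff_eq_zero_or_eq_one.mp hcard with h | h
      · left; exact card_eq_zero.mp h
      · right
        obtain ⟨a, rfl⟩ := card_eq_one.mp h
        exact ⟨a, hsub (mem_singleton_self a), rfl⟩
    · rintro (rfl | ⟨a, ha, rfl⟩)
      · simp
      · exact ⟨singleton_subset_iff.mpr ha, by simp⟩
  rw [heq, card_insert_of_notMem, card_image_of_injective _ (fun a b h => by simpa using h)]
  · rw [Nat.card_Icc]; omega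
  · simp

private lemma count_filter (n m : ℕ) (hm : 1 ≤ m) (hmn : m ≤ n - 1) (hn : 2 ≤ n) :
    ((Finset.Icc 1 (n - 1)).powerset.filter
      fun S => S.Nonempty ∧ (S.filter (· ≤ m)).card ≤ 1).card
      = (m + 1) * 2 ^ (n - 1 - m) - 1 := by
  set F := (Finset.Icc 1 (n - 1)).powerset.filter (fun S => (S.filter (· ≤ m)).card ≤ 1) with hFdef
  have hFcard : F.card = (m + 1) * 2 ^ (n - 1 - m) := by
    have hbij := Finset.card_nbij' (s := F)
      (t := ((Finset.Icc 1 m).powerset.filter fun B => B.card ≤ 1) ×ˢ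
        (Finset.Icc (m + 1) (n - 1)).powerset)
      (fun S => (S.filter (· ≤ m), S.filter (fun x => ¬ x ≤ m)))
      (fun p => p.1 ∪ p.2)
      (by
        intro S hSF
        simp only [hFdef, mem_coe, mem_filter, mem_powerset] at hSF
        obtain ⟨hsub, hcard⟩ := hSF
        simp only [mem_coe, mem_product, mem_filter, mem_powerset]
        refine ⟨⟨?_, hcard⟩, ?_⟩
        · intro x hx
          simp only [mem_filter] at hx
          have := hsub hx.1
          simp only [mem_Icc] at this ⊢
          omega
        · intro x hx
          simp only [mem_filter] at hx
          have := hsub hx.1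
          simp only [mem_Icc] at this ⊢
          omega)
      (by
        intro p hp
        simp only [mem_coe, mem_product, mem_filter, mem_powerset] at hp
        obtain ⟨⟨hB, hBc⟩, hT⟩ := hp
        simp only [hFdef, mem_coe, mem_filter, mem_powerset]
        constructor
        · intro x hx
          rcases mem_union.mp hx with h | h
          · have := hB h; simp only [mem_Icc] at this ⊢; omega
          · have := hT h; simp only [mem_Icc] at this ⊢; omega
        · have : (p.1 ∪ p.2).filter (· ≤ m) = p.1 := by
            rw [filter_union]
            have e1 : p.1.filter (· ≤ m) = p.1 := by
              apply filter_true_of_mem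
              intro x hx; have := hB hx; simp only [mem_Icc] at this; omega
            have e2 : p.2.filter (· ≤ m) = ∅ := by
              apply filter_false_of_mem
              intro x hx; have := hT hx; simp only [mem_Icc] at this; omega
            rw [e1, e2, union_empty]
          rw [this]; exact hBc)
      (by
        intro S _
        exact filter_union_filter_not_eq _ S)
      (by
        intro p hp
        simp only [mem_coe, mem_product, mem_filter, mem_powerset] at hp
        obtain ⟨⟨hB, _⟩, hT⟩ := hp
        have e1 : p.1.filter (· ≤ m) = p.1 := by
          apply filter_true_of_mem
          intro x hx; have := hB hx; simp only [mem_Icc] at this; omega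
        have e2 : p.2.filter (· ≤ m) = ∅ := by
          apply filter_false_of_mem
          intro x hx; have := hT hx; simp only [mem_Icc] at this; omega
        have e3 : p.1.filter (fun x => ¬ x ≤ m) = ∅ := by
          apply filter_false_of_mem
          intro x hx; have := hB hx; simp only [mem_Icc] at this; omega
        have e4 : p.2.filter (fun x => ¬ x ≤ m) = p.2 := by
          apply filter_true_of_mem
          intro x hx; have := hT hx; simp only [mem_Icc] at this; omega
        ext1 <;> simp only [filter_union, e1, e2, e3, e4, union_empty, empty_union])
    rw [hbij, card_product, card_le_one_powerset, card_powerset, Nat.card_Icc]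
    congr 2
    omega
  have hset : ((Finset.Icc 1 (n - 1)).powerset.filter
      fun S => S.Nonempty ∧ (S.filter (· ≤ m)).card ≤ 1) = F.erase ∅ := by
    ext S
    simp only [hFdef, mem_erase, mem_filter, mem_powerset, ← nonempty_iff_ne_empty]
    tauto
  have hmem : (∅ : Finset ℕ) ∈ F := by
    simp [hFdef]
  rw [hset, card_erase_of_mem hmem, hFcard]

private lemma sum_identity (n : ℕ) (hn : 2 ≤ n) :
    ∀ d, d ≤ n - 2 →
      (n - d) * 2 ^ d = n + ∑ j ∈ Finset.range d, 2 ^ j * (n - 2 - j) := by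
  intro d
  induction d with
  | zero => intro _; simp
  | succ d ih =>
    intro hd
    have h1 := ih (by omega)
    rw [Finset.sum_range_succ, ← Nat.add_assoc, ← h1]
    obtain ⟨c, h1c, h2c, h3c⟩ : ∃ c, n - d = c + 2 ∧ n - (d + 1) = c + 1 ∧ n - 2 - d = c :=
      ⟨n - d - 2, by omega, by omega, by omega⟩
    rw [h1c, h2c, h3c, pow_succ]
    ring

private lemma sum_reindex (n m : ℕ) (hn : 2 ≤ n) :
    ∑ k ∈ Finset.Icc (m + 1) (n - 1), 2 ^ (n - k - 1) * (k - 1)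
      = ∑ j ∈ Finset.range (n - 1 - m), 2 ^ j * (n - 2 - j) := by
  apply Finset.sum_nbij' (i := fun k => n - 1 - k) (j := fun j => n - 1 - j)
  · intro k hk; simp only [mem_Icc] at hk; simp only [mem_range]; omega
  · intro j hj; simp only [mem_range] at hj; simp only [mem_Icc]; omega
  · intro k hk; simp only [mem_Icc] at hk; omega
  · intro j hj; simp only [mem_range] at hj; omega
  · intro k hk
    simp only [mem_Icc] at hk
    have e1 : n - k - 1 = n - 1 - k := by omega
    have e2 : n - 2 - (n - 1 - k) = k - 1 := by omega
    rw [e1, e2]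

private lemma main_count (n m : ℕ) (hm : 1 ≤ m) (hmn : m ≤ n - 1) (hn : 2 ≤ n) :
    ((Finset.Icc 1 (n - 1)).powerset.filter
        fun S => S.Nonempty ∧ m + 1 ≤ controlPos n S).card
      = (m + 1) * 2 ^ (n - 1 - m) - 1 := by
  rw [← count_filter n m hm hmn hn]
  congr 1
  apply filter_congr
  intro S hS
  simp only [mem_powerset] at hS
  constructor
  · rintro ⟨hne, h⟩; exact ⟨hne, (key_iff n m hm hmn hn S hne).mp h⟩
  · rintro ⟨hne, h⟩; exact ⟨hne, (key_iff n m hm hmn hn S hne).mpr h⟩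

theorem controlPos_ge_counts (n : ℕ) (hn : 2 ≤ n) :
    (((Finset.Icc 1 (n - 1)).powerset.filter
        fun S => S.Nonempty ∧ (n - 1) + 1 ≤ controlPos n S).card = n - 1) ∧
    ∀ m : ℕ, 1 ≤ m → m ≤ n - 2 →
      ((Finset.Icc 1 (n - 1)).powerset.filter
        fun S => S.Nonempty ∧ m + 1 ≤ controlPos n S).card =
      (n - 1) + ∑ k ∈ Finset.Icc (m + 1) (n - 1), 2 ^ (n - k - 1) * (k - 1) := by
  constructor
  · rw [main_count n (n - 1) (by omega) le_rfl hn]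
    have : n - 1 - (n - 1) = 0 := by omega
    rw [this]
    omega
  · intro m hm hmn
    rw [main_count n m hm (by omega) hn, sum_reindex n m hn]
    have hid := sum_identity n hn (n - 1 - m) (by omega)
    have hnd : n - (n - 1 - m) = m + 1 := by omega
    rw [hnd] at hid
    omega
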